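/- Let α be a finite type and let R be a relation on α whose transitive closure is antisymmetric (i.e. if x and y are related both ways by the transitive closure of R, then x = y). Then R has a unique transitive reduction: there exists exactly one relation S on α such that the transitive closure of S equals the transitive closure of R, and S is minimal with this property, meaning that every relation T on α with T contained in S (∀ a b, T a b → S a b) whose transitive closure equals the transitive closure of R must equal S. -/

import Mathlib

/-- **Unique transitive reduction.**
If `R` is a relation on a finite type whose transitive closure is antisymmetric, then `R`
has a unique transitive reduction: there is exactly one relation `S` having the same
transitive closure as `R` and minimal (w.r.t. containment) among such relations. -/
theorem exists_unique_transitive_reduction {α : Type*} [Fintype α] (R : α → α → Prop)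
    (h : ∀ x y : α, Relation.TransGen R x y → Relation.TransGen R y x → x = y) :
    ∃! S : α → α → Prop,
      Relation.TransGen S = Relation.TransGen R ∧
        ∀ T : α → α → Prop, (∀ a b, T a b → S a b) →
          Relation.TransGen T = Relation.TransGen R → T = S := by
  classical
  set C : α → α → Prop := Relation.TransGen R with hCdef
  set S₀ : α → α → Prop :=
    fun a b => C a b ∧ ¬ ∃ z, z ≠ a ∧ z ≠ b ∧ C a z ∧ C z b with hS₀def
  -- Claim A: every relation with closure C contains S₀
  have claimA : ∀ S : α → α → Prop, Relation.TransGen S = C →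
      ∀ a b, S₀ a b → S a b := by
    intro S hS a b hab
    have htg : Relation.TransGen S a b := by
      rw [hS]; exact hab.1
    induction htg using Relation.TransGen.head_induction_on with
    | single h' => exact h'
    | head h' htail ih =>
      rename_i a' c
      have hca'c : C a' c := by rw [← hS]; exact Relation.TransGen.single h'
      have hccb : C c b := by rw [← hS]; exact htail
      by_cases hc : c = b
      · subst hc; exact h'
      · by_cases hc' : c = a'
        · subst hc'; exact ih hab
        · exact absurd ⟨c, hc', hc, hca'c, hccb⟩ hab.2
  -- Claim B: the closure of S₀ is C
  have claimB : ∀ a b, C a b → Relation.TransGen S₀ a b := by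
    have key : ∀ n : ℕ, ∀ a b : α,
        ({w | (w = a ∨ C a w) ∧ (w = b ∨ C w b)}).ncard ≤ n →
        C a b → Relation.TransGen S₀ a b := by
      intro n
      induction n with
      | zero =>
        intro a b hle hab
        exfalso
        have ha : a ∈ {w | (w = a ∨ C a w) ∧ (w = b ∨ C w b)} :=
          ⟨Or.inl rfl, Or.inr hab⟩
        have : 0 < ({w | (w = a ∨ C a w) ∧ (w = b ∨ C w b)}).ncard :=
          (Set.ncard_pos (Set.toFinite _)).mpr ⟨a, ha⟩
        omega
      | succ n ih =>
        intro a b hle hab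
        by_cases hs : S₀ a b
        · exact Relation.TransGen.single hs
        · have hz : ∃ z, z ≠ a ∧ z ≠ b ∧ C a z ∧ C z b := by
            by_contra hcon
            exact hs ⟨hab, hcon⟩
          obtain ⟨z, hza, hzb, h1, h2⟩ := hz
          have hsub1 : {w | (w = a ∨ C a w) ∧ (w = z ∨ C w z)} ⊂
              {w | (w = a ∨ C a w) ∧ (w = b ∨ C w b)} := by
            constructor
            · rintro w ⟨hw1, hw2⟩
              refine ⟨hw1, Or.inr ?_⟩
              rcases hw2 with rfl | hw2
              · exact h2
              · exact hw2.trans h2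
            · intro hcon
              have hb : b ∈ {w | (w = a ∨ C a w) ∧ (w = b ∨ C w b)} :=
                ⟨Or.inr hab, Or.inl rfl⟩
              have := hcon hb
              rcases this.2 with rfl | hbz
              · exact hzb rfl
              · exact hzb (h z b h2 hbz)
          have hsub2 : {w | (w = z ∨ C z w) ∧ (w = b ∨ C w b)} ⊂
              {w | (w = a ∨ C a w) ∧ (w = b ∨ C w b)} := by
            constructor
            · rintro w ⟨hw1, hw2⟩
              refine ⟨Or.inr ?_, hw2⟩
              rcases hw1 with rfl | hw1
              · exact h1
              · exact h1.trans hw1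
            · intro hcon
              have ha : a ∈ {w | (w = a ∨ C a w) ∧ (w = b ∨ C w b)} :=
                ⟨Or.inl rfl, Or.inr hab⟩
              have := hcon ha
              rcases this.1 with rfl | haz
              · exact hza rfl
              · exact hza (h z a haz h1)
          have hfin : ({w | (w = a ∨ C a w) ∧ (w = b ∨ C w b)}).Finite :=
            Set.toFinite _
          have hlt1 := Set.ncard_lt_ncard hsub1 hfin
          have hlt2 := Set.ncard_lt_ncard hsub2 hfin
          exact (ih a z (by omega) h1).trans (ih z b (by omega) h2)
    intro a b hab
    exact key _ a b le_rfl hab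
  have hclos : Relation.TransGen S₀ = Relation.TransGen R := by
    funext a b
    apply propext
    constructor
    · intro hab
      induction hab with
      | single h' => exact h'.1
      | tail _ h' ih => exact ih.trans h'.1
    · exact claimB a b
  refine ⟨S₀, ⟨hclos, ?_⟩, ?_⟩
  · intro T hTS hT
    funext a b
    apply propext
    exact ⟨fun ht => hTS a b ht, fun hs => claimA T hT a b hs⟩
  · rintro S ⟨hS, hSmin⟩
    exact (hSmin S₀ (claimA S hS) hclos).symm
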